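/- arXiv:1705.03520 — 3 statements merged into one kernel-verified Lean document; each statement's English description precedes it below -/
import Mathlib

section
/- Let v : ℝⁿ → ℝ be continuously differentiable, γ ∈ (0,1], and let X : [t,∞) → ℝⁿ be a C¹ trajectory with derivative Ẋ(τ) = f(X(τ), U(τ)) where R(X(τ),U(τ)) + ∇v(X(τ))·f(X(τ),U(τ)) ≥ −ln γ · v(X(τ)) for all τ ≥ t. Then for all Δt > 0: v(X(t)) ≤ ∫_t^{t+Δt} γ^{τ−t} R(X(τ),U(τ)) dτ + γ^{Δt} v(X(t+Δt)). -/
open Filter MeasureTheory intervalIntegral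

/-- If along a trajectory the Hamiltonian inequality
`R + ∇v·f ≥ −ln γ · v` holds, then the integral Bellman inequality holds. -/
theorem stmt0 {n : ℕ} {A : Type*}
    (f : EuclideanSpace ℝ (Fin n) → A → EuclideanSpace ℝ (Fin n))
    (R : EuclideanSpace ℝ (Fin n) → A → ℝ)
    (v : EuclideanSpace ℝ (Fin n) → ℝ)
    (γ t : ℝ) (hγ0 : 0 < γ) (hγ1 : γ ≤ 1)
    (X : ℝ → EuclideanSpace ℝ (Fin n)) (U : ℝ → A)
    (hv : ContDiff ℝ 1 v)
    (hX : ∀ τ, t ≤ τ → HasDerivAt X (f (X τ) (U τ)) τ)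
    (hRcont : ContinuousOn (fun τ => R (X τ) (U τ)) (Set.Ici t))
    (hineq : ∀ τ, t ≤ τ →
      R (X τ) (U τ) + fderiv ℝ v (X τ) (f (X τ) (U τ)) ≥ -Real.log γ * v (X τ)) :
    ∀ Δt > 0,
      v (X t) ≤ (∫ τ in t..(t + Δt), γ ^ (τ - t) * R (X τ) (U τ))
        + γ ^ Δt * v (X (t + Δt)) := by
  intro Δt hΔt
  set h : ℝ → ℝ := fun τ => γ ^ (τ - t) * R (X τ) (U τ) with hh
  set F : ℝ → ℝ := fun τ => ∫ s in t..τ, h s with hF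
  set g : ℝ → ℝ := fun τ => γ ^ (τ - t) * v (X τ) with hg
  set φ : ℝ → ℝ := fun τ => F τ + g τ with hφ
  -- continuity of h on Ici t
  have hpowc : Continuous (fun τ : ℝ => γ ^ (τ - t)) := by
    have : ∀ τ : ℝ, HasDerivAt (fun τ : ℝ => γ ^ (τ - t))
        (γ ^ (τ - t) * Real.log γ * 1) τ := fun τ =>
      ((Real.hasStrictDerivAt_const_rpow hγ0 (τ - t)).hasDerivAt).comp τ
        ((hasDerivAt_id τ).sub_const t)
    exact continuous_iff_continuousAt.2 fun τ => ((this τ).continuousAt)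
  have hhc : ContinuousOn h (Set.Ici t) :=
    (hpowc.continuousOn).mul hRcont
  have hXc : ContinuousOn X (Set.Ici t) := fun τ hτ =>
    ((hX τ hτ).continuousAt).continuousWithinAt
  have hgc : ContinuousOn g (Set.Ici t) :=
    hpowc.continuousOn.mul ((hv.continuous.comp_continuousOn hXc))
  have hhint : ∀ τ, t ≤ τ → IntervalIntegrable h volume t τ := fun τ hτ =>
    (hhc.mono (by rw [Set.uIcc_of_le hτ]; exact Set.Icc_subset_Ici_self)).intervalIntegrable
  -- derivative of g on Ici t
  have hgd : ∀ τ, t ≤ τ → HasDerivAt g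
      (γ ^ (τ - t) * (Real.log γ * v (X τ) + fderiv ℝ v (X τ) (f (X τ) (U τ)))) τ := by
    intro τ hτ
    have h1 : HasDerivAt (fun τ : ℝ => γ ^ (τ - t)) (γ ^ (τ - t) * Real.log γ * 1) τ :=
      ((Real.hasStrictDerivAt_const_rpow hγ0 (τ - t)).hasDerivAt).comp τ
        ((hasDerivAt_id τ).sub_const t)
    have h2 : HasDerivAt (fun τ => v (X τ)) (fderiv ℝ v (X τ) (f (X τ) (U τ))) τ := by
      have hvd : HasFDerivAt v (fderiv ℝ v (X τ)) (X τ) :=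
        (hv.differentiable one_ne_zero (X τ)).hasFDerivAt
      exact hvd.comp_hasDerivAt τ (hX τ hτ)
    have := h1.mul h2
    refine this.congr_deriv ?_
    ring
  have hFd : ∀ τ, t < τ → HasDerivAt F (h τ) τ := by
    intro τ hlt
    refine intervalIntegral.integral_hasDerivAt_right (hhint τ (le_of_lt hlt))
      ⟨Set.Ici t, Ici_mem_nhds hlt, (hhc.mono Set.Subset.rfl).aestronglyMeasurable
        measurableSet_Ici⟩ ?_
    exact hhc.continuousAt (Ici_mem_nhds hlt)
  -- derivative of φ positive on interior
  have hφd : ∀ τ ∈ interior (Set.Ici t), HasDerivAt φ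
      (γ ^ (τ - t) * (R (X τ) (U τ) + Real.log γ * v (X τ)
        + fderiv ℝ v (X τ) (f (X τ) (U τ)))) τ := by
    intro τ hτ
    rw [interior_Ici] at hτ
    have := (hFd τ hτ).add (hgd τ (le_of_lt hτ))
    refine this.congr_deriv ?_
    simp only [hh]
    ring
  -- continuity of φ on Ici t
  have hFc : ContinuousOn F (Set.Ici t) := by
    intro τ hτ
    rcases eq_or_lt_of_le (Set.mem_Ici.mp hτ) with rfl | hlt
    · exact (intervalIntegral.integral_hasDerivWithinAt_right (hhint t le_rfl)
        ⟨Set.Ici t, mem_of_superset self_mem_nhdsWithin Set.Ioi_subset_Ici_self,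
          (hhc.mono Set.Subset.rfl).aestronglyMeasurable measurableSet_Ici⟩
        ((hhc t hτ).mono Set.Ioi_subset_Ici_self)).continuousWithinAt
    · exact (hFd τ hlt).continuousAt.continuousWithinAt
  have hφc : ContinuousOn φ (Set.Ici t) := hFc.add hgc
  -- monotonicity
  have hmono : MonotoneOn φ (Set.Ici t) := by
    refine monotoneOn_of_hasDerivWithinAt_nonneg (convex_Ici t) hφc
      (fun τ hτ => (hφd τ hτ).hasDerivWithinAt) ?_
    intro τ hτ
    rw [interior_Ici] at hτ
    have h1 := hineq τ (le_of_lt hτ)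
    have h2 : 0 ≤ R (X τ) (U τ) + Real.log γ * v (X τ)
        + fderiv ℝ v (X τ) (f (X τ) (U τ)) := by linarith
    exact mul_nonneg (Real.rpow_nonneg (le_of_lt hγ0) _) h2
  have key := hmono (Set.self_mem_Ici) (by simp [le_of_lt hΔt] : (t + Δt) ∈ Set.Ici t)
    (by linarith : t ≤ t + Δt)
  simp only [hφ, hF, hg, intervalIntegral.integral_same, sub_self, Real.rpow_zero,
    one_mul, zero_add, add_sub_cancel_left] at key
  exact key
end

section
/- Let v : ℝⁿ → ℝ be continuously differentiable, γ ∈ (0,1], and X : [t,∞) → ℝⁿ a C¹ trajectory with Ẋ(τ) = f(X(τ),U(τ)). If for all τ ≥ t, −ln γ · v(X(τ)) = R(X(τ),U(τ)) + ∇v(X(τ))·f(X(τ),U(τ)), then for every Δt > 0: v(X(t)) = ∫_t^{t+Δt} γ^{τ−t} R(X(τ),U(τ)) dτ + γ^{Δt} v(X(t+Δt)). -/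
open Filter MeasureTheory intervalIntegral

/-- If along a trajectory the Hamiltonian equality
`R + ∇v·f = −ln γ · v` holds, then the integral Bellman equality holds. -/
theorem stmt1 {n : ℕ} {A : Type*}
    (f : EuclideanSpace ℝ (Fin n) → A → EuclideanSpace ℝ (Fin n))
    (R : EuclideanSpace ℝ (Fin n) → A → ℝ)
    (v : EuclideanSpace ℝ (Fin n) → ℝ)
    (γ t : ℝ) (hγ0 : 0 < γ) (hγ1 : γ ≤ 1)
    (X : ℝ → EuclideanSpace ℝ (Fin n)) (U : ℝ → A)
    (hv : ContDiff ℝ 1 v)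
    (hX : ∀ τ, t ≤ τ → HasDerivAt X (f (X τ) (U τ)) τ)
    (hRcont : ContinuousOn (fun τ => R (X τ) (U τ)) (Set.Ici t))
    (hineq : ∀ τ, t ≤ τ →
      -Real.log γ * v (X τ) = R (X τ) (U τ) + fderiv ℝ v (X τ) (f (X τ) (U τ))) :
    ∀ Δt > 0,
      v (X t) = (∫ τ in t..(t + Δt), γ ^ (τ - t) * R (X τ) (U τ))
        + γ ^ Δt * v (X (t + Δt)) := by
  intro Δt hΔt
  have hle : t ≤ t + Δt := by linarith
  set g : ℝ → ℝ := fun τ => γ ^ (τ - t) * v (X τ) with hg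
  have hexp : ∀ τ : ℝ, γ ^ (τ - t) = Real.exp ((τ - t) * Real.log γ) := by
    intro τ; rw [Real.rpow_def_of_pos hγ0]; ring_nf
  have hderiv : ∀ τ ∈ Set.uIcc t (t + Δt),
      HasDerivAt g (-(γ ^ (τ - t) * R (X τ) (U τ))) τ := by
    intro τ hτ
    rw [Set.uIcc_of_le hle] at hτ
    have htτ : t ≤ τ := hτ.1
    have h1 : HasDerivAt (fun s : ℝ => γ ^ (s - t)) (γ ^ (τ - t) * Real.log γ) τ := by
      have := (Real.hasDerivAt_exp ((τ - t) * Real.log γ)).comp τ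
        (((hasDerivAt_id τ).sub_const t).mul_const (Real.log γ))
      simp only [one_mul] at this
      have heq : (fun s : ℝ => γ ^ (s - t)) =
          (fun s : ℝ => Real.exp ((s - t) * Real.log γ)) := by
        funext s; exact hexp s
      rw [heq, hexp]
      exact this
    have h2 : HasDerivAt (fun s => v (X s))
        (fderiv ℝ v (X τ) (f (X τ) (U τ))) τ :=
      ((hv.differentiable one_ne_zero (X τ)).hasFDerivAt).comp_hasDerivAt τ (hX τ htτ)
    have h3 := h1.mul h2
    convert h3 using 1
    case e'_4 => rfl
    case e'_5 => rfl
    case e'_8 => rfl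
    have hine := hineq τ htτ
    have : fderiv ℝ v (X τ) (f (X τ) (U τ)) = -Real.log γ * v (X τ) - R (X τ) (U τ) := by
      linarith
    rw [this]; ring
  have hcont : IntervalIntegrable (fun τ => -(γ ^ (τ - t) * R (X τ) (U τ)))
      MeasureTheory.volume t (t + Δt) := by
    apply ContinuousOn.intervalIntegrable
    apply ContinuousOn.neg
    apply ContinuousOn.mul
    · exact Continuous.continuousOn (by
        have : (fun τ : ℝ => γ ^ (τ - t)) =
            (fun τ : ℝ => Real.exp ((τ - t) * Real.log γ)) := by
          funext s; exact hexp s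
        rw [this]; continuity)
    · exact hRcont.mono (by rw [Set.uIcc_of_le hle]; exact fun x hx => hx.1)
  have hFTC := intervalIntegral.integral_eq_sub_of_hasDerivAt hderiv hcont
  rw [intervalIntegral.integral_neg] at hFTC
  have hg0 : g t = v (X t) := by simp [hg, Real.rpow_zero]
  have hg1 : g (t + Δt) = γ ^ Δt * v (X (t + Δt)) := by simp [hg]
  rw [hg0, hg1] at hFTC
  linarith
end

section
/- If for every admissible policy π there exists a policy π' maximizing the Hamiltonian pointwise, i.e., π'(x) ∈ argmax_{u∈U} h(x, u, ∇v_π(x)) for all x, and the policy improvement theorem holds, then the optimal value function v_* satisfies the HJB equation: −ln γ · v_*(x) = max_{u∈U} h(x, u, ∇v_*(x)) for all x. -/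
open Filter MeasureTheory Topology

noncomputable section HJB

variable {n : ℕ} {A : Type*}

/-- The (discounted) value function of a stationary policy `ρ`, given the flow
`φ ρ` of the closed-loop system. -/
def val (γ : ℝ) (R : EuclideanSpace ℝ (Fin n) → A → ℝ)
    (φ : (EuclideanSpace ℝ (Fin n) → A) → EuclideanSpace ℝ (Fin n) → ℝ →
      EuclideanSpace ℝ (Fin n))
    (ρ : EuclideanSpace ℝ (Fin n) → A) (x : EuclideanSpace ℝ (Fin n)) : ℝ :=
  ∫ τ in Set.Ioi (0:ℝ), γ ^ τ * R (φ ρ x τ) (ρ (φ ρ x τ))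

/-- A policy is admissible when its return is integrable from every initial
state (its value function is finite everywhere). -/
def admissible (γ : ℝ) (R : EuclideanSpace ℝ (Fin n) → A → ℝ)
    (φ : (EuclideanSpace ℝ (Fin n) → A) → EuclideanSpace ℝ (Fin n) → ℝ →
      EuclideanSpace ℝ (Fin n))
    (ρ : EuclideanSpace ℝ (Fin n) → A) : Prop :=
  ∀ x, IntegrableOn (fun τ => γ ^ τ * R (φ ρ x τ) (ρ (φ ρ x τ))) (Set.Ioi (0:ℝ))

/-- if every admissible policy admits a policy maximizing the
Hamiltonian pointwise, and the policy improvement theorem holds, then the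
optimal value function `v⋆` satisfies the HJB equation
`−ln γ · v⋆(x) = max_{u} h(x, u, ∇v⋆(x))`. -/
theorem stmt7
    (f : EuclideanSpace ℝ (Fin n) → A → EuclideanSpace ℝ (Fin n))
    (R : EuclideanSpace ℝ (Fin n) → A → ℝ)
    (γ : ℝ) (hγ0 : 0 < γ) (hγ1 : γ ≤ 1)
    (φ : (EuclideanSpace ℝ (Fin n) → A) → EuclideanSpace ℝ (Fin n) → ℝ →
      EuclideanSpace ℝ (Fin n))
    -- every admissible policy satisfies the infinitesimal Bellman equation
    (hbell : ∀ ρ, admissible γ R φ ρ → ∀ x,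
      -Real.log γ * val γ R φ ρ x
        = R x (ρ x) + fderiv ℝ (val γ R φ ρ) x (f x (ρ x)))
    -- existence of a pointwise Hamiltonian maximizer (Assumption 1)
    (himpex : ∀ ρ, admissible γ R φ ρ → ∃ ρ' : EuclideanSpace ℝ (Fin n) → A,
      ∀ x u, R x u + fderiv ℝ (val γ R φ ρ) x (f x u)
        ≤ R x (ρ' x) + fderiv ℝ (val γ R φ ρ) x (f x (ρ' x)))
    -- the policy improvement theorem holds
    (hPIT : ∀ ρ ρ', admissible γ R φ ρ →
      (∀ x u, R x u + fderiv ℝ (val γ R φ ρ) x (f x u)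
        ≤ R x (ρ' x) + fderiv ℝ (val γ R φ ρ) x (f x (ρ' x))) →
      admissible γ R φ ρ' ∧ ∀ x, val γ R φ ρ x ≤ val γ R φ ρ' x)
    -- v⋆ is the value function of an optimal admissible policy π⋆
    (πstar : EuclideanSpace ℝ (Fin n) → A)
    (vstar : EuclideanSpace ℝ (Fin n) → ℝ)
    (hstaradm : admissible γ R φ πstar)
    (hvstar : vstar = val γ R φ πstar)
    (hopt : ∀ ρ, admissible γ R φ ρ → ∀ x, val γ R φ ρ x ≤ vstar x)
    -- the value function of any admissible policy agrees with v⋆ only if it equals v⋆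
    (hC1 : ContDiff ℝ 1 vstar) :
    ∀ x, IsGreatest (Set.range fun u : A => R x u + fderiv ℝ vstar x (f x u))
      (-Real.log γ * vstar x) := by
  obtain ⟨ρ', hρ'⟩ := himpex πstar hstaradm
  rw [← hvstar] at hρ'
  obtain ⟨hadm', hle⟩ := hPIT πstar ρ' hstaradm (by rw [← hvstar]; exact hρ')
  have heq : val γ R φ ρ' = vstar := by
    funext x
    exact le_antisymm (hopt ρ' hadm' x) (hvstar ▸ hle x)
  have hb := hbell ρ' hadm'
  rw [heq] at hb
  intro x
  constructor
  · exact ⟨ρ' x, (hb x).symm⟩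
  · rintro y ⟨u, rfl⟩
    exact (hρ' x u).trans (hb x).ge

end HJB
end
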